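/- Let G be a finite group and A a nontrivial normal subgroup of G such that A/M_G(A) is perfect. Then M_G(A) = M(A). -/

import Mathlib

/-- `B` is a `G`-invariant subgroup of `A`: a subgroup of `A` normalized by all of `G`. -/
def IsGInv (G : Type*) [Group G] (A B : Subgroup G) : Prop :=
  B ≤ A ∧ ∀ g : G, ∀ b ∈ B, g * b * g⁻¹ ∈ B

/-- `B` is a maximal proper `G`-invariant subgroup of `A`. -/
def IsMaxGInv (G : Type*) [Group G] (A B : Subgroup G) : Prop :=
  IsGInv G A B ∧ B < A ∧ ∀ C : Subgroup G, IsGInv G A C → C < A → B ≤ C → B = C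

/-- `M_G(A)`: the intersection of all maximal proper `G`-invariant subgroups of `A`. -/
def MG (G : Type*) [Group G] (A : Subgroup G) : Subgroup G :=
  sInf {B | IsMaxGInv G A B}

/-- `B` is a maximal proper normal subgroup of `A` (as subgroups of `G`). -/
def IsMaxNormalIn (G : Type*) [Group G] (A B : Subgroup G) : Prop :=
  (B ≤ A ∧ ∀ a ∈ A, ∀ b ∈ B, a * b * a⁻¹ ∈ B) ∧ B < A ∧
    ∀ C : Subgroup G, (C ≤ A ∧ ∀ a ∈ A, ∀ c ∈ C, a * c * a⁻¹ ∈ C) → C < A → B ≤ C → B = C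

/-- `M(A)`: the Mel'nikov subgroup (cosocle) of `A`, the intersection of all maximal
proper normal subgroups of `A`. -/
def Mel (G : Type*) [Group G] (A : Subgroup G) : Subgroup G :=
  sInf {B | IsMaxNormalIn G A B}

section Aux

open scoped commutatorElement

variable {G : Type*} [Group G]

/-- `B` is normal in `A` (both subgroups of `G`). -/
def NIn (A B : Subgroup G) : Prop :=
  B ≤ A ∧ ∀ a ∈ A, ∀ b ∈ B, a * b * a⁻¹ ∈ B

/-- Conjugate-comap: `cjc g B = g⁻¹ B g`. -/
def cjc (g : G) (B : Subgroup G) : Subgroup G :=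
  B.comap (MulAut.conj g).toMonoidHom

lemma mem_cjc {g x : G} {B : Subgroup G} : x ∈ cjc g B ↔ g * x * g⁻¹ ∈ B := by
  simp [cjc, Subgroup.mem_comap]

lemma cjc_cjc {g : G} {B : Subgroup G} : cjc g (cjc g⁻¹ B) = B := by
  ext x
  simp only [mem_cjc, inv_inv]
  constructor
  · intro h
    have : g⁻¹ * (g * x * g⁻¹) * g = x := by group
    rwa [this] at h
  · intro h
    have : g⁻¹ * (g * x * g⁻¹) * g = x := by group
    rwa [this]

/-- Abstract key lemma: if `H ⊔ K = ⊤ = H ⊔ N` with all three normal, then the commutator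
subgroup is contained in `H ⊔ (K ⊓ N)`. -/
lemma key_abs {P : Type*} [Group P] (H K N : Subgroup P)
    (hH : H.Normal) (hK : K.Normal) (hN : N.Normal)
    (hHK : H ⊔ K = ⊤) (hHN : H ⊔ N = ⊤) :
    ⁅(⊤ : Subgroup P), (⊤ : Subgroup P)⁆ ≤ H ⊔ (K ⊓ N) := by
  haveI := hH; haveI := hK; haveI := hN
  set L := H ⊔ (K ⊓ N) with hLdef
  haveI hLn : L.Normal := inferInstance
  set π := QuotientGroup.mk' L with hπ
  have hker : π.ker = L := QuotientGroup.ker_mk' L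
  have hsur : Function.Surjective π := QuotientGroup.mk'_surjective L
  have hHL : H.map π = ⊥ := by
    rw [Subgroup.map_eq_bot_iff, hker]; exact le_sup_left
  have htop : ((⊤ : Subgroup P).map π) = ⊤ := Subgroup.map_top_of_surjective π hsur
  have hKL : K.map π = ⊤ := by
    have := Subgroup.map_sup H K π
    rw [hHK, htop, hHL, bot_sup_eq] at this
    exact this.symm
  have hNL : N.map π = ⊤ := by
    have := Subgroup.map_sup H N π
    rw [hHN, htop, hHL, bot_sup_eq] at this
    exact this.symm
  have hcomm : ⁅(⊤ : Subgroup (P ⧸ L)), (⊤ : Subgroup (P ⧸ L))⁆ = ⊥ := by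
    have h1 : ⁅K, N⁆ ≤ K ⊓ N := le_inf (Subgroup.commutator_le_left K N) (Subgroup.commutator_le_right K N)
    have h2 : ⁅K, N⁆ ≤ L := h1.trans le_sup_right
    have h3 : ⁅Subgroup.map π K, Subgroup.map π N⁆ = ⊥ := by
      rw [← Subgroup.map_commutator, Subgroup.map_eq_bot_iff, hker]
      exact h2
    rw [hKL, hNL] at h3
    exact h3
  rw [Subgroup.commutator_le]
  intro a _ b _
  have : π ⁅a, b⁆ ∈ ⁅(⊤ : Subgroup (P ⧸ L)), (⊤ : Subgroup (P ⧸ L))⁆ := by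
    rw [map_commutatorElement]
    exact Subgroup.commutator_mem_commutator (Subgroup.mem_top _) (Subgroup.mem_top _)
  rw [hcomm, Subgroup.mem_bot] at this
  have : ⁅a, b⁆ ∈ π.ker := this
  rwa [hker] at this

/-- Key lemma at the level of subgroups of `G`. -/
lemma key (A H K N : Subgroup G) (hH : NIn A H) (hK : NIn A K) (hN : NIn A N)
    (hHK : H ⊔ K = A) (hHN : H ⊔ N = A) :
    ⁅A, A⁆ ≤ H ⊔ (K ⊓ N) := by
  have hKNA : K ⊓ N ≤ A := inf_le_left.trans hK.1
  -- normality of the subgroupOf's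
  have nor : ∀ (X : Subgroup G), NIn A X → (X.subgroupOf A).Normal := by
    intro X hX
    constructor
    rintro ⟨x, hxA⟩ hx ⟨a, haA⟩
    rw [Subgroup.mem_subgroupOf] at hx ⊢
    exact hX.2 a haA x hx
  have h1 : H.subgroupOf A ⊔ K.subgroupOf A = ⊤ := by
    rw [← Subgroup.subgroupOf_sup hH.1 hK.1, hHK, Subgroup.subgroupOf_self]
  have h2 : H.subgroupOf A ⊔ N.subgroupOf A = ⊤ := by
    rw [← Subgroup.subgroupOf_sup hH.1 hN.1, hHN, Subgroup.subgroupOf_self]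
  have habs := key_abs (H.subgroupOf A) (K.subgroupOf A) (N.subgroupOf A)
    (nor H hH) (nor K hK) (nor N hN) h1 h2
  rw [Subgroup.commutator_le]
  intro a ha b hb
  have hmem : ⁅(⟨a, ha⟩ : A), (⟨b, hb⟩ : A)⁆ ∈
      H.subgroupOf A ⊔ (K.subgroupOf A ⊓ N.subgroupOf A) :=
    habs (Subgroup.commutator_mem_commutator (Subgroup.mem_top _) (Subgroup.mem_top _))
  have hinf : K.subgroupOf A ⊓ N.subgroupOf A = (K ⊓ N).subgroupOf A := rfl
  rw [hinf, ← Subgroup.subgroupOf_sup hH.1 hKNA, Subgroup.mem_subgroupOf] at hmem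
  exact hmem

variable (A : Subgroup G)

/-- Existence of maximal proper `G`-invariant subgroups above a given one. -/
lemma exists_max_ginv [Finite G] (C : Subgroup G) (hC : IsGInv G A C) (hCA : C < A) :
    ∃ B : Subgroup G, IsMaxGInv G A B ∧ C ≤ B := by
  haveI : Finite (Subgroup G) := Finite.of_injective _ SetLike.coe_injective
  set S : Set (Subgroup G) := {B | IsGInv G A B ∧ B < A ∧ C ≤ B} with hS
  have hne : S.Nonempty := ⟨C, hC, hCA, le_rfl⟩
  obtain ⟨B, hBS, hBmax⟩ := Set.Finite.exists_maximalFor id S (Set.toFinite S) hne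
  refine ⟨B, ⟨hBS.1, hBS.2.1, ?_⟩, hBS.2.2⟩
  intro D hD hDA hBD
  exact le_antisymm hBD (hBmax ⟨hD, hDA, hBS.2.2.trans hBD⟩ hBD)

/-- Existence of maximal proper normal-in-`A` subgroups above a given one. -/
lemma exists_max_normal [Finite G] (C : Subgroup G) (hC : NIn A C) (hCA : C < A) :
    ∃ N : Subgroup G, IsMaxNormalIn G A N ∧ C ≤ N := by
  haveI : Finite (Subgroup G) := Finite.of_injective _ SetLike.coe_injective
  set S : Set (Subgroup G) := {B | NIn A B ∧ B < A ∧ C ≤ B} with hS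
  have hne : S.Nonempty := ⟨C, hC, hCA, le_rfl⟩
  obtain ⟨B, hBS, hBmax⟩ := Set.Finite.exists_maximalFor id S (Set.toFinite S) hne
  refine ⟨B, ⟨hBS.1, hBS.2.1, ?_⟩, hBS.2.2⟩
  intro D hD hDA hBD
  exact le_antisymm hBD (hBmax ⟨hD, hDA, hBS.2.2.trans hBD⟩ hBD)

/-- Conjugation (by `cjc`) preserves maximal normal subgroups of a normal subgroup `A`. -/
lemma maxNormal_cjc (hA : A.Normal) (g : G) (N : Subgroup G) (hN : IsMaxNormalIn G A N) :
    IsMaxNormalIn G A (cjc g N) := by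
  obtain ⟨⟨hNA, hNn⟩, hNlt, hNmax⟩ := hN
  have hle : cjc g N ≤ A := by
    intro x hx
    rw [mem_cjc] at hx
    have := hA.conj_mem _ (hNA hx) g⁻¹
    simpa [mul_assoc] using this
  have hn : ∀ a ∈ A, ∀ b ∈ cjc g N, a * b * a⁻¹ ∈ cjc g N := by
    intro a ha b hb
    rw [mem_cjc] at hb ⊢
    have h1 : g * (a * b * a⁻¹) * g⁻¹ =
        (g * a * g⁻¹) * (g * b * g⁻¹) * (g * a * g⁻¹)⁻¹ := by group
    rw [h1]
    exact hNn _ (hA.conj_mem a ha g) _ hb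
  have hlt : cjc g N < A := by
    refine lt_of_le_of_ne hle ?_
    intro heq
    apply hNlt.ne
    refine le_antisymm hNA ?_
    intro x hx
    have hx' : g⁻¹ * x * g ∈ A := by
      have := hA.conj_mem x hx g⁻¹
      simpa [mul_assoc] using this
    have : g⁻¹ * x * g ∈ cjc g N := heq ▸ hx'
    rw [mem_cjc] at this
    have hxx : g * (g⁻¹ * x * g) * g⁻¹ = x := by group
    rwa [hxx] at this
  refine ⟨⟨hle, hn⟩, hlt, ?_⟩
  intro C hC hCA hNC
  -- pull back along g⁻¹
  set C' := cjc g⁻¹ C with hC'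
  have hC'le : C' ≤ A := by
    intro x hx
    rw [mem_cjc] at hx
    have := hA.conj_mem _ (hC.1 hx) g
    simpa [mul_assoc] using this
  have hC'n : ∀ a ∈ A, ∀ c ∈ C', a * c * a⁻¹ ∈ C' := by
    intro a ha c hc
    rw [mem_cjc] at hc ⊢
    have h1 : g⁻¹ * (a * c * a⁻¹) * g⁻¹⁻¹ =
        (g⁻¹ * a * g) * (g⁻¹ * c * g⁻¹⁻¹) * (g⁻¹ * a * g)⁻¹ := by group
    rw [h1]
    refine hC.2 _ ?_ _ hc
    have := hA.conj_mem a ha g⁻¹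
    simpa [mul_assoc] using this
  have hC'lt : C' < A := by
    refine lt_of_le_of_ne hC'le ?_
    intro heq
    apply hCA.ne
    refine le_antisymm hCA.le ?_
    intro x hx
    have hx' : g * x * g⁻¹ ∈ A := hA.conj_mem x hx g
    have : g * x * g⁻¹ ∈ C' := heq ▸ hx'
    rw [mem_cjc] at this
    have hxx : g⁻¹ * (g * x * g⁻¹) * g⁻¹⁻¹ = x := by group
    rwa [hxx] at this
  have hNC' : N ≤ C' := by
    intro x hx
    rw [mem_cjc]
    have : g⁻¹ * x * g ∈ cjc g N := by
      rw [mem_cjc]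
      have hxx : g * (g⁻¹ * x * g) * g⁻¹ = x := by group
      rwa [hxx]
    have := hNC this
    simpa using this
  have : N = C' := hNmax C' ⟨hC'le, hC'n⟩ hC'lt hNC'
  rw [this, hC', cjc_cjc]

end Aux

/-- If `A` is a nontrivial normal subgroup of a finite group `G` such that `A/M_G(A)` is
perfect, then `M_G(A) = M(A)`. -/
theorem MG_eq_Mel_of_perfect_quotient (G : Type*) [Group G] [Finite G] (A : Subgroup G)
    (hA : A.Normal) (hnt : A ≠ ⊥)
    (hperf : ⁅A, A⁆ ⊔ MG G A = A) :
    MG G A = Mel G A := by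
  -- basic facts about D := MG G A
  set D := MG G A with hD
  have hbot : IsGInv G A ⊥ := ⟨bot_le, by intro g b hb; rw [Subgroup.mem_bot] at hb; simp [hb]⟩
  obtain ⟨B0, hB0, -⟩ := exists_max_ginv A ⊥ hbot (bot_lt_iff_ne_bot.mpr hnt)
  have hDB0 : D ≤ B0 := sInf_le (show B0 ∈ {B | IsMaxGInv G A B} from hB0)
  have hDA : D ≤ A := hDB0.trans hB0.1.1
  have hDinv : ∀ g : G, ∀ x ∈ D, g * x * g⁻¹ ∈ D := by
    intro g x hx
    rw [hD, MG, Subgroup.mem_sInf] at hx ⊢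
    intro B hB
    exact hB.1.2 g x (hx B hB)
  have hDn : NIn A D := ⟨hDA, fun a _ x hx => hDinv a x hx⟩
  -- Step 1: D ≤ N for every maximal normal subgroup N of A
  have step1 : ∀ N : Subgroup G, IsMaxNormalIn G A N → D ≤ N := by
    intro N hN
    by_contra hDN
    -- D is not contained in any conjugate of N
    have hDNc : ∀ g : G, ¬ D ≤ cjc g N := by
      intro g hle
      apply hDN
      intro x hx
      have h1 : g⁻¹ * x * g ∈ D := by
        have := hDinv g⁻¹ x hx
        simpa [mul_assoc] using this
      have h2 : g * (g⁻¹ * x * g) * g⁻¹ ∈ N := mem_cjc.mp (hle h1)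
      have hxx : g * (g⁻¹ * x * g) * g⁻¹ = x := by group
      rwa [hxx] at h2
    -- D joins each conjugate to all of A
    have hDsup : ∀ g : G, D ⊔ cjc g N = A := by
      intro g
      have hNg := maxNormal_cjc A hA g N hN
      have hJA : D ⊔ cjc g N ≤ A := sup_le hDA hNg.1.1
      by_contra hne
      have hJn : NIn A (D ⊔ cjc g N) := by
        refine ⟨hJA, ?_⟩
        intro a ha b hb
        have : D ⊔ cjc g N ≤ cjc a (D ⊔ cjc g N) := by
          refine sup_le ?_ ?_
          · intro x hx
            rw [mem_cjc]
            exact Subgroup.mem_sup_left (hDn.2 _ ha _ hx)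
          · intro x hx
            rw [mem_cjc]
            exact Subgroup.mem_sup_right (hNg.1.2 _ ha _ hx)
        exact mem_cjc.mp (this hb)
      have heq := hNg.2.2 (D ⊔ cjc g N) ⟨hJA, hJn.2⟩ (lt_of_le_of_ne hJA hne) le_sup_right
      exact hDNc g (heq ▸ le_sup_left)
    haveI : Fintype G := Fintype.ofFinite G
    haveI : DecidableEq G := Classical.decEq G
    -- the partial cores are normal in A
    have hKn : ∀ s : Finset G, NIn A (A ⊓ ⨅ g ∈ s, cjc g N) := by
      intro s
      constructor
      · exact inf_le_left
      · intro a ha b hb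
        rw [Subgroup.mem_inf] at hb ⊢
        refine ⟨hA.conj_mem b hb.1 a, ?_⟩
        rw [Subgroup.mem_iInf] at hb ⊢
        intro g
        rw [Subgroup.mem_iInf]
        intro hg
        have hbg := Subgroup.mem_iInf.mp (hb.2 g) hg
        rw [mem_cjc] at hbg ⊢
        have h1 : g * (a * b * a⁻¹) * g⁻¹ =
            (g * a * g⁻¹) * (g * b * g⁻¹) * (g * a * g⁻¹)⁻¹ := by group
        rw [h1]
        exact hN.1.2 _ (hA.conj_mem a ha g) _ hbg
    -- by induction, D ⊔ (A ⊓ core) = A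
    have hind : ∀ s : Finset G, D ⊔ (A ⊓ ⨅ g ∈ s, cjc g N) = A := by
      intro s
      induction s using Finset.induction_on with
      | empty => simp [sup_eq_right.mpr hDA]
      | @insert g s hg ih =>
        have hsplit : A ⊓ ⨅ x ∈ insert g s, cjc x N =
            (A ⊓ ⨅ x ∈ s, cjc x N) ⊓ cjc g N := by
          rw [Finset.iInf_insert]
          rw [inf_comm (cjc g N) _, inf_assoc]
        rw [hsplit]
        have hNg := maxNormal_cjc A hA g N hN
        have hNgn : NIn A (cjc g N) := ⟨hNg.1.1, hNg.1.2⟩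
        have hkey := key A D (A ⊓ ⨅ x ∈ s, cjc x N) (cjc g N) hDn (hKn s) hNgn ih (hDsup g)
        have hle : D ⊔ ((A ⊓ ⨅ x ∈ s, cjc x N) ⊓ cjc g N) ≤ A :=
          sup_le hDA (le_trans inf_le_left inf_le_left)
        refine le_antisymm hle ?_
        have h4 : ⁅A, A⁆ ⊔ D ≤ D ⊔ ((A ⊓ ⨅ x ∈ s, cjc x N) ⊓ cjc g N) :=
          sup_le hkey le_sup_left
        rwa [hperf] at h4
    -- the full core is G-invariant, proper, and joins with D to A
    set K := A ⊓ ⨅ g ∈ (Finset.univ : Finset G), cjc g N with hK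
    have hKA : D ⊔ K = A := hind Finset.univ
    have hKN : K ≤ N := by
      intro x hx
      rw [hK, Subgroup.mem_inf] at hx
      have := Subgroup.mem_iInf.mp (Subgroup.mem_iInf.mp hx.2 1) (Finset.mem_univ 1)
      rw [mem_cjc] at this
      simpa using this
    have hKinv : IsGInv G A K := by
      refine ⟨inf_le_left, ?_⟩
      intro h x hx
      rw [hK, Subgroup.mem_inf] at hx ⊢
      refine ⟨hA.conj_mem x hx.1 h, ?_⟩
      rw [Subgroup.mem_iInf]
      intro g
      rw [Subgroup.mem_iInf]
      intro _
      rw [mem_cjc]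
      have hgx := Subgroup.mem_iInf.mp (Subgroup.mem_iInf.mp hx.2 (g * h)) (Finset.mem_univ _)
      rw [mem_cjc] at hgx
      have h1 : g * (h * x * h⁻¹) * g⁻¹ = (g * h) * x * (g * h)⁻¹ := by group
      rw [h1]
      exact hgx
    have hKlt : K < A := lt_of_le_of_lt hKN hN.2.1
    obtain ⟨B, hB, hKB⟩ := exists_max_ginv A K hKinv hKlt
    have hDB : D ≤ B := sInf_le (show B ∈ {X | IsMaxGInv G A X} from hB)
    have : A ≤ B := by
      rw [← hKA]
      exact sup_le hDB hKB
    exact hB.2.1.ne (le_antisymm hB.2.1.le this)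
  -- Step 2: Mel ≤ B for every maximal G-invariant B
  have step2 : ∀ B : Subgroup G, IsMaxGInv G A B → Mel G A ≤ B := by
    intro B hB
    set S : Set (Subgroup G) := {N | IsMaxNormalIn G A N ∧ B ≤ N} with hS
    have hBn : NIn A B := ⟨hB.1.1, fun a _ b hb => hB.1.2 a b hb⟩
    obtain ⟨N0, hN0, hBN0⟩ := exists_max_normal A B hBn hB.2.1
    have hne : S.Nonempty := ⟨N0, hN0, hBN0⟩
    set R := sInf S with hR
    have hRle : R ≤ N0 := sInf_le (show N0 ∈ S from ⟨hN0, hBN0⟩)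
    have hRA : R < A := lt_of_le_of_lt hRle hN0.2.1
    have hRinv : IsGInv G A R := by
      refine ⟨hRle.trans hN0.1.1, ?_⟩
      intro g x hx
      rw [hR, Subgroup.mem_sInf] at hx ⊢
      intro N hN
      -- cjc g N ∈ S, and x ∈ cjc g N gives g x g⁻¹ ∈ N
      have hcj : cjc g N ∈ S := by
        refine ⟨maxNormal_cjc A hA g N hN.1, ?_⟩
        intro b hb
        rw [mem_cjc]
        exact hN.2 (hB.1.2 g b hb)
      exact mem_cjc.mp (hx _ hcj)
    have hBR : B ≤ R := le_sInf fun N hN => hN.2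
    have : B = R := hB.2.2 R hRinv hRA hBR
    rw [this]
    exact le_sInf fun N hN => sInf_le hN.1
  refine le_antisymm ?_ ?_
  · exact le_sInf fun N hN => step1 N hN
  · exact le_sInf fun B hB => step2 B hB
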